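/- If S : X → Y and T : Y → Z are linear automata with boundary, then the binding S·T : X → Z is linearizable. -/

import Mathlib

/-- An automaton with boundary `S : X → Y`, where the action sets `X`, `Y`
have trivial (reflexive) actions `eX`, `eY`. -/
structure Aut (X Y : Type) (eX : X) (eY : Y) where
  State : Type
  Motion : Type
  src : Motion → State
  tgt : Motion → State
  refl : State → Motion
  refl_src : ∀ v, src (refl v) = v
  refl_tgt : ∀ v, tgt (refl v) = v
  labL : Motion → X
  labR : Motion → Y
  labL_refl : ∀ v, labL (refl v) = eX
  labR_refl : ∀ v, labR (refl v) = eY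

namespace Aut

variable {X Y Z W : Type} {eX : X} {eY : Y} {eZ : Z} {eW : W}

/-- The binding `S·T` of automata `S : X → Y` and `T : Y → Z`. -/
def bind (S : Aut X Y eX eY) (T : Aut Y Z eY eZ) : Aut X Z eX eZ where
  State := S.State × T.State
  Motion := {p : S.Motion × T.Motion // S.labR p.1 = T.labL p.2}
  src p := (S.src p.val.1, T.src p.val.2)
  tgt p := (S.tgt p.val.1, T.tgt p.val.2)
  refl v := ⟨(S.refl v.1, T.refl v.2), by rw [S.labR_refl, T.labL_refl]⟩
  refl_src v := by simp [S.refl_src, T.refl_src]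
  refl_tgt v := by simp [S.refl_tgt, T.refl_tgt]
  labL p := S.labL p.val.1
  labR p := T.labR p.val.2
  labL_refl v := S.labL_refl v.1
  labR_refl v := T.labR_refl v.2

/-- The product `S×T` of automata `S : X → Y` and `T : Z → W`. -/
def prod (S : Aut X Y eX eY) (T : Aut Z W eZ eW) :
    Aut (X × Z) (Y × W) (eX, eZ) (eY, eW) where
  State := S.State × T.State
  Motion := S.Motion × T.Motion
  src p := (S.src p.1, T.src p.2)
  tgt p := (S.tgt p.1, T.tgt p.2)
  refl v := (S.refl v.1, T.refl v.2)
  refl_src v := by simp [S.refl_src, T.refl_src]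
  refl_tgt v := by simp [S.refl_tgt, T.refl_tgt]
  labL p := (S.labL p.1, T.labL p.2)
  labR p := (S.labR p.1, T.labR p.2)
  labL_refl v := by simp [S.labL_refl, T.labL_refl]
  labR_refl v := by simp [S.labR_refl, T.labR_refl]

/-- The feedback `fb_Y S` of an automaton `S : X×Y → Y×Z`. -/
def fb (S : Aut (X × Y) (Y × Z) (eX, eY) (eY, eZ)) : Aut X Z eX eZ where
  State := S.State
  Motion := {e : S.Motion // (S.labL e).2 = (S.labR e).1}
  src e := S.src e.val
  tgt e := S.tgt e.val
  refl v := ⟨S.refl v, by rw [S.labL_refl, S.labR_refl]⟩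
  refl_src v := S.refl_src v
  refl_tgt v := S.refl_tgt v
  labL e := (S.labL e.val).1
  labR e := (S.labR e.val).2
  labL_refl v := by simp [S.labL_refl]
  labR_refl v := by simp [S.labR_refl]

/-- The identity automaton on an action set `X`. -/
def ident (X : Type) (eX : X) : Aut X X eX eX where
  State := PUnit
  Motion := X
  src _ := PUnit.unit
  tgt _ := PUnit.unit
  refl _ := eX
  refl_src _ := rfl
  refl_tgt _ := rfl
  labL x := x
  labR x := x
  labL_refl _ := rfl
  labR_refl _ := rfl

end Aut

/-- `IsPath A v l w` : the list of motions `l` is a finite behaviour of `A`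
from the state `v` ending at the state `w`. -/
def IsPath {X Y : Type} {eX : X} {eY : Y} (A : Aut X Y eX eY) :
    A.State → List A.Motion → A.State → Prop
  | v, [], w => v = w
  | v, e :: l, w => A.src e = v ∧ IsPath A (A.tgt e) l w

/-- `w` is reachable from `v`: there is a finite (possibly empty) behaviour from `v` to `w`. -/
def Reaches {X Y : Type} {eX : X} {eY : Y} (A : Aut X Y eX eY) (v w : A.State) : Prop :=
  ∃ l, IsPath A v l w

/-- A state is a deadlock if the only motion out of it is the reflexive motion. -/
def Deadlock {X Y : Type} {eX : X} {eY : Y} (A : Aut X Y eX eY) (v : A.State) : Prop :=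
  ∀ e, A.src e = v → e = A.refl v

/-- A behaviour (finite or infinite) of `A` from the state `v0`, encoded as a
finite-or-infinite sequence `Stream'.Seq` of motions. -/
def IsBehaviour {X Y : Type} {eX : X} {eY : Y} (A : Aut X Y eX eY) (v0 : A.State)
    (s : Stream'.Seq A.Motion) : Prop :=
  (∀ e, s.get? 0 = some e → A.src e = v0) ∧
  (∀ k e f, s.get? k = some e → s.get? (k + 1) = some f → A.src f = A.tgt e)

/-- A comparison of automata: maps on states and motions preserving sources,
targets, reflexive motions and boundary labels. -/
structure Comparison {X Y : Type} {eX : X} {eY : Y} (S T : Aut X Y eX eY) where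
  onState : S.State → T.State
  onMotion : S.Motion → T.Motion
  src_eq : ∀ e, T.src (onMotion e) = onState (S.src e)
  tgt_eq : ∀ e, T.tgt (onMotion e) = onState (S.tgt e)
  refl_eq : ∀ v, onMotion (S.refl v) = T.refl (onState v)
  labL_eq : ∀ e, T.labL (onMotion e) = S.labL e
  labR_eq : ∀ e, T.labR (onMotion e) = S.labR e

/-- An isomorphism of automata: bijections on states and motions preserving sources,
targets, reflexive motions and boundary labels. -/
structure AutIso {X Y : Type} {eX : X} {eY : Y} (S T : Aut X Y eX eY) where
  stateEquiv : S.State ≃ T.State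
  motionEquiv : S.Motion ≃ T.Motion
  src_eq : ∀ e, T.src (motionEquiv e) = stateEquiv (S.src e)
  tgt_eq : ∀ e, T.tgt (motionEquiv e) = stateEquiv (S.tgt e)
  refl_eq : ∀ v, motionEquiv (S.refl v) = T.refl (stateEquiv v)
  labL_eq : ∀ e, T.labL (motionEquiv e) = S.labL e
  labR_eq : ∀ e, T.labR (motionEquiv e) = S.labR e

/-- The reachable subautomaton `r(A)` of `A` with initial state `v0`. -/
def reach {X Y : Type} {eX : X} {eY : Y} (A : Aut X Y eX eY) (v0 : A.State) :
    Aut X Y eX eY where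
  State := {v : A.State // Reaches A v0 v}
  Motion := {e : A.Motion // Reaches A v0 (A.src e) ∧ Reaches A v0 (A.tgt e)}
  src e := ⟨A.src e.val, e.property.1⟩
  tgt e := ⟨A.tgt e.val, e.property.2⟩
  refl v := ⟨A.refl v.val, by rw [A.refl_src, A.refl_tgt]; exact ⟨v.property, v.property⟩⟩
  refl_src v := Subtype.ext (A.refl_src v.val)
  refl_tgt v := Subtype.ext (A.refl_tgt v.val)
  labL e := A.labL e.val
  labR e := A.labR e.val
  labL_refl v := A.labL_refl v.val
  labR_refl v := A.labR_refl v.val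

/-- The initial state of `A`, as a state of the reachable subautomaton `r(A)`. -/
def reachInit {X Y : Type} {eX : X} {eY : Y} (A : Aut X Y eX eY) (v0 : A.State) :
    (reach A v0).State :=
  ⟨v0, ⟨[], rfl⟩⟩

/-- A simulation `S ⇒ T` of automata with initial states: a comparison
`r(S) → r(T)` preserving the initial state and satisfying the lifting property. -/
structure Simulation {X Y : Type} {eX : X} {eY : Y} (S T : Aut X Y eX eY)
    (v0 : S.State) (w0 : T.State) where
  comp : Comparison (reach S v0) (reach T w0)
  init : (comp.onState (reachInit S v0)).val = w0
  lift : ∀ (v : (reach S v0).State) (e : (reach T w0).Motion),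
      (reach T w0).src e = comp.onState v →
      ∃ (l : List ((reach S v0).Motion)) (e' : (reach S v0).Motion)
        (v' : (reach S v0).State),
        IsPath (reach S v0) v (l ++ [e']) v' ∧
        (∀ m ∈ l, comp.onMotion m = (reach T w0).refl (comp.onState v)) ∧
        comp.onMotion e' = e

/-- A motion of a two-boundary automaton is linear if it is labelled by the trivial
action on at least one of the two boundaries. -/
def LinearMotion {X Z : Type} {eX : X} {eZ : Z} (U : Aut X Z eX eZ) (e : U.Motion) : Prop :=
  U.labL e = eX ∨ U.labR e = eZ

/-- An automaton is linear if every motion is linear. -/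
def LinearAut {X Z : Type} {eX : X} {eZ : Z} (U : Aut X Z eX eZ) : Prop :=
  ∀ e, LinearMotion U e

/-- A motion performs a nontrivial action on the boundary `b`
(`true` = left boundary, `false` = right boundary). -/
def NontrivOn {X Z : Type} {eX : X} {eZ : Z} (U : Aut X Z eX eZ) :
    Bool → U.Motion → Prop
  | true, e => U.labL e ≠ eX
  | false, e => U.labR e ≠ eZ

/-- A two-boundary automaton is linearizable if every motion `e : v → w` can, for every
total order on its two boundaries, be refined into a finite behaviour from `v` to `w` of
linear motions respecting the order on boundaries and performing exactly the nontrivial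
actions of `e` on each boundary. -/
def Linearizable {X Z : Type} {eX : X} {eZ : Z} (U : Aut X Z eX eZ) : Prop :=
  ∀ (e : U.Motion) (le : Bool → Bool → Prop), IsLinearOrder Bool le →
    ∃ l : List U.Motion, IsPath U (U.src e) l (U.tgt e) ∧
      (∀ m ∈ l, LinearMotion U m) ∧
      (∀ (k k' : ℕ) (ek ek' : U.Motion) (b b' : Bool),
        l[k]? = some ek → l[k']? = some ek' →
        NontrivOn U b ek → NontrivOn U b' ek' → le b b' → k ≤ k') ∧
      (U.labL e ≠ eX → ∃ k ek, l[(k : ℕ)]? = some ek ∧ U.labL ek = U.labL e) ∧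
      (U.labR e ≠ eZ → ∃ k ek, l[(k : ℕ)]? = some ek ∧ U.labR ek = U.labR e)

/-- The binding of linear automata is linearizable. -/
theorem bind_linearizable {X Y Z : Type} {eX : X} {eY : Y} {eZ : Z}
    (S : Aut X Y eX eY) (T : Aut Y Z eY eZ)
    (hS : LinearAut S) (hT : LinearAut T) :
    Linearizable (S.bind T) := by
  intro p le hord
  obtain ⟨⟨e, f⟩, h⟩ := p
  by_cases hY : S.labR e = eY
  · -- both sub-motions can be separated
    have hfY : T.labL f = eY := h ▸ hY
    -- motion doing only e
    have he1 : S.labR e = T.labL (T.refl (T.src f)) := by rw [T.labL_refl, hY]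
    have he2 : S.labR e = T.labL (T.refl (T.tgt f)) := by rw [T.labL_refl, hY]
    have hf1 : S.labR (S.refl (S.tgt e)) = T.labL f := by rw [S.labR_refl, hfY]
    have hf2 : S.labR (S.refl (S.src e)) = T.labL f := by rw [S.labR_refl, hfY]
    by_cases hle : le true false
    · -- left boundary first: [ (e, refl), (refl, f) ]
      refine ⟨[⟨(e, T.refl (T.src f)), he1⟩, ⟨(S.refl (S.tgt e), f), hf1⟩], ?_, ?_, ?_, ?_, ?_⟩
      · refine ⟨?_, ?_, ?_⟩ <;>
          simp [Aut.bind, IsPath, S.refl_src, S.refl_tgt, T.refl_src, T.refl_tgt]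
      · intro m hm
        replace hm := (List.mem_cons.mp hm).imp_right List.mem_singleton.mp
        rcases hm with rfl | rfl
        · right; exact T.labR_refl _
        · left; exact S.labL_refl _
      · intro k k' ek ek' b b' hk hk' hb hb' hbb'
        match k, k' with
        | 0, _ => exact Nat.zero_le _
        | 1, 0 =>
          exfalso
          cases hk; cases hk'
          cases b with
          | true => exact hb (S.labL_refl _)
          | false =>
            cases b' with
            | false => exact hb' (T.labR_refl _)
            | true => exact Bool.noConfusion (hord.toIsPartialOrder.toAntisymm.antisymm _ _ hle hbb')
        | 1, (k'+1) => exact Nat.one_le_iff_ne_zero.mpr (Nat.succ_ne_zero _)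
        | (k+2), _ => cases hk
      · intro hL
        exact ⟨0, _, rfl, rfl⟩
      · intro hR
        exact ⟨1, _, rfl, rfl⟩
    · -- right boundary first: [ (refl, f), (e, refl) ]
      have hle' : le false true := (hord.toTotal.total true false).resolve_left hle
      refine ⟨[⟨(S.refl (S.src e), f), hf2⟩, ⟨(e, T.refl (T.tgt f)), he2⟩], ?_, ?_, ?_, ?_, ?_⟩
      · refine ⟨?_, ?_, ?_⟩ <;>
          simp [Aut.bind, IsPath, S.refl_src, S.refl_tgt, T.refl_src, T.refl_tgt]
      · intro m hm
        replace hm := (List.mem_cons.mp hm).imp_right List.mem_singleton.mp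
        rcases hm with rfl | rfl
        · left; exact S.labL_refl _
        · right; exact T.labR_refl _
      · intro k k' ek ek' b b' hk hk' hb hb' hbb'
        match k, k' with
        | 0, _ => exact Nat.zero_le _
        | 1, 0 =>
          exfalso
          cases hk; cases hk'
          cases b with
          | false => exact hb (T.labR_refl _)
          | true =>
            cases b' with
            | true => exact hb' (S.labL_refl _)
            | false => exact hle hbb'
        | 1, (k'+1) => exact Nat.one_le_iff_ne_zero.mpr (Nat.succ_ne_zero _)
        | (k+2), _ => cases hk
      · intro hL
        exact ⟨1, _, rfl, rfl⟩
      · intro hR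
        exact ⟨0, _, rfl, rfl⟩
  · -- e is trivial on X and f is trivial on Z; the single motion is already linear
    have heX : S.labL e = eX := (hS e).resolve_right hY
    have hfZ : T.labR f = eZ := (hT f).resolve_left (fun hf => hY (h.trans hf))
    refine ⟨[⟨(e, f), h⟩], ⟨rfl, rfl⟩, ?_, ?_, ?_, ?_⟩
    · intro m hm
      replace hm := List.mem_singleton.mp hm
      subst hm; left; exact heX
    · intro k k' ek ek' b b' hk hk' hb hb' hbb'
      match k, k' with
      | 0, _ => exact Nat.zero_le _
      | (k+1), _ => cases hk
    · intro hL; exact absurd heX hL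
    · intro hR; exact absurd hfZ hR
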